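/- arXiv:0705.4314 — 2 statements merged into one kernel-verified Lean document; each statement's English description precedes it below -/
import Mathlib

section
/- Every symplectic 2n×2n real matrix Υ can be written as a finite product of the following generator matrices (each acting on at most two modes): squeezers S_i(a) with a ≠ 0, Fourier transforms F_i, two-mode QND interactions Q^X_{ij}(g) and Q^P_{ij}(g), single-mode phase gates P^X_i(g) and P^P_i(g), and mode swaps σ_{ij}. In other words, these one- and two-mode gates generate the symplectic group Sp(2n, ℝ). -/
open Matrix BigOperators

noncomputable section

/-- The symplectic product on `ℝ^{2n}`, where a vector `u = (p|x)` has momentum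
coordinates `u (Sum.inl i) = p_i` and position coordinates `u (Sum.inr i) = x_i`:
`u ⊙ v = p·x' − x·p'`. -/
def symp {n : ℕ} (u v : Fin n ⊕ Fin n → ℝ) : ℝ :=
  ∑ i : Fin n, (u (Sum.inl i) * v (Sum.inr i) - u (Sum.inr i) * v (Sum.inl i))

/-- The standard symplectic form matrix `J = [[0, I], [−I, 0]]`. -/
def J (n : ℕ) : Matrix (Fin n ⊕ Fin n) (Fin n ⊕ Fin n) ℝ :=
  Matrix.fromBlocks 0 1 (-1) 0

/-- `Υ` is symplectic: `Υᵀ J Υ = J`. -/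
def IsSymplectic {n : ℕ} (Υ : Matrix (Fin n ⊕ Fin n) (Fin n ⊕ Fin n) ℝ) : Prop :=
  Υᵀ * J n * Υ = J n

/-- Squeezer `S_i(a)`: `x_i ↦ a x_i`, `p_i ↦ p_i / a`, all other coordinates fixed. -/
def squeezer (n : ℕ) (i : Fin n) (a : ℝ) :
    Matrix (Fin n ⊕ Fin n) (Fin n ⊕ Fin n) ℝ := fun r c =>
  if r = Sum.inl i ∧ c = Sum.inl i then a⁻¹
  else if r = Sum.inr i ∧ c = Sum.inr i then a
  else if r = c then 1 else 0

/-- Fourier transform `F_i`: the new position coordinate is minus the old momentum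
coordinate (`x_i ↦ −p_i`) and the new momentum coordinate is the old position
coordinate (`p_i ↦ x_i`); all other coordinates fixed. -/
def fourierGate (n : ℕ) (i : Fin n) :
    Matrix (Fin n ⊕ Fin n) (Fin n ⊕ Fin n) ℝ := fun r c =>
  if r = Sum.inl i then (if c = Sum.inr i then 1 else 0)
  else if r = Sum.inr i then (if c = Sum.inl i then -1 else 0)
  else if r = c then 1 else 0

/-- Position-quadrature QND interaction `Q^X_{ij}(g)`:
`x_j ↦ x_j + g x_i`, `p_i ↦ p_i − g p_j`, all other coordinates fixed. -/
def qndX (n : ℕ) (i j : Fin n) (g : ℝ) :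
    Matrix (Fin n ⊕ Fin n) (Fin n ⊕ Fin n) ℝ := fun r c =>
  if r = Sum.inr j ∧ c = Sum.inr i then g
  else if r = Sum.inl i ∧ c = Sum.inl j then -g
  else if r = c then 1 else 0

/-- Momentum-quadrature QND interaction `Q^P_{ij}(g)`:
`x_i ↦ x_i − g x_j`, `p_j ↦ p_j + g p_i`, all other coordinates fixed. -/
def qndP (n : ℕ) (i j : Fin n) (g : ℝ) :
    Matrix (Fin n ⊕ Fin n) (Fin n ⊕ Fin n) ℝ := fun r c =>
  if r = Sum.inr i ∧ c = Sum.inr j then -g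
  else if r = Sum.inl j ∧ c = Sum.inl i then g
  else if r = c then 1 else 0

/-- Position-quadrature phase gate `P^X_i(g)`: `p_i ↦ p_i + g x_i`, all other
coordinates fixed. -/
def phaseX (n : ℕ) (i : Fin n) (g : ℝ) :
    Matrix (Fin n ⊕ Fin n) (Fin n ⊕ Fin n) ℝ := fun r c =>
  if r = Sum.inl i ∧ c = Sum.inr i then g
  else if r = c then 1 else 0

/-- Momentum-quadrature phase gate `P^P_i(g)`: `x_i ↦ x_i + g p_i`, all other
coordinates fixed. -/
def phaseP (n : ℕ) (i : Fin n) (g : ℝ) :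
    Matrix (Fin n ⊕ Fin n) (Fin n ⊕ Fin n) ℝ := fun r c =>
  if r = Sum.inr i ∧ c = Sum.inl i then g
  else if r = c then 1 else 0

/-- Mode swap `σ_{ij}`: exchanges `(p_i, x_i)` with `(p_j, x_j)`. -/
def modeSwap (n : ℕ) (i j : Fin n) :
    Matrix (Fin n ⊕ Fin n) (Fin n ⊕ Fin n) ℝ := fun r c =>
  if c = Sum.map (Equiv.swap i j) (Equiv.swap i j) r then 1 else 0

/-- `M` is one of the elementary linear-optics generator matrices: a squeezer
`S_i(a)` with `a ≠ 0`, a Fourier transform `F_i`, a QND interaction `Q^X_{ij}(g)`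
or `Q^P_{ij}(g)` with `i ≠ j`, a phase gate `P^X_i(g)` or `P^P_i(g)`, or a mode
swap `σ_{ij}`. -/
def IsGenerator {n : ℕ} (M : Matrix (Fin n ⊕ Fin n) (Fin n ⊕ Fin n) ℝ) : Prop :=
  (∃ (i : Fin n) (a : ℝ), a ≠ 0 ∧ M = squeezer n i a) ∨
  (∃ i : Fin n, M = fourierGate n i) ∨
  (∃ (i j : Fin n) (g : ℝ), i ≠ j ∧ M = qndX n i j g) ∨
  (∃ (i j : Fin n) (g : ℝ), i ≠ j ∧ M = qndP n i j g) ∨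
  (∃ (i : Fin n) (g : ℝ), M = phaseX n i g) ∨
  (∃ (i : Fin n) (g : ℝ), M = phaseP n i g) ∨
  (∃ i j : Fin n, M = modeSwap n i j)

set_option maxRecDepth 10000

namespace SympGenAux

open Matrix

variable {n : ℕ}

abbrev MM (n : ℕ) := Matrix (Fin n ⊕ Fin n) (Fin n ⊕ Fin n) ℝ
abbrev Mn (n : ℕ) := Matrix (Fin n) (Fin n) ℝ

/-- `Y` is a finite product of generators. -/
def Gen (Y : MM n) : Prop :=
  ∃ L : List (MM n), (∀ M ∈ L, IsGenerator M) ∧ Y = L.prod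

lemma Gen.one : Gen (1 : MM n) := ⟨[], by simp, rfl⟩

lemma Gen.mul {X Y : MM n} (hX : Gen X) (hY : Gen Y) : Gen (X * Y) := by
  obtain ⟨L1, h1, rfl⟩ := hX
  obtain ⟨L2, h2, rfl⟩ := hY
  refine ⟨L1 ++ L2, ?_, (List.prod_append).symm⟩
  intro M hM
  rcases List.mem_append.1 hM with h | h
  exacts [h1 M h, h2 M h]

lemma Gen.of_gen {X : MM n} (h : IsGenerator X) : Gen X := ⟨[X], by simp [h], by simp⟩

/-! ### Block matrices -/

def uhp (B : Mn n) : MM n := fromBlocks 1 B 0 1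
def lowp (B : Mn n) : MM n := fromBlocks 1 0 B 1
def dd (P Q : Mn n) : MM n := fromBlocks P 0 0 Q

lemma dd_mul (P Q P' Q' : Mn n) : dd P Q * dd P' Q' = dd (P * P') (Q * Q') := by
  simp [dd, fromBlocks_multiply]

lemma dd_one : dd (1 : Mn n) 1 = 1 := fromBlocks_one

lemma uhp_mul (B B' : Mn n) : uhp B * uhp B' = uhp (B + B') := by
  simp [uhp, fromBlocks_multiply, add_comm]

lemma uhp_zero : uhp (0 : Mn n) = 1 := by simp [uhp]

lemma lowp_mul (B B' : Mn n) : lowp B * lowp B' = lowp (B + B') := by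
  simp [lowp, fromBlocks_multiply, add_comm]

lemma lowp_zero : lowp (0 : Mn n) = 1 := by simp [lowp]

/-! ### Identification of the gates as block matrices -/

lemma phaseX_eq (i : Fin n) (g : ℝ) : phaseX n i g = uhp (Matrix.single i i g) := by
  ext r c
  rcases r with a | a <;> rcases c with b | b <;>
    simp only [phaseX, uhp, fromBlocks, Matrix.single, one_apply, of_apply, Sum.elim_inl,
      Sum.elim_inr, Sum.inl.injEq, Sum.inr.injEq, Matrix.zero_apply, reduceCtorEq, and_false,
      false_and, if_false] <;>
  split_ifs <;> (try (obtain ⟨rfl, rfl⟩ := ‹_ = _ ∧ _ = _›)) <;> simp_all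

lemma phaseP_eq (i : Fin n) (g : ℝ) : phaseP n i g = lowp (Matrix.single i i g) := by
  ext r c
  rcases r with a | a <;> rcases c with b | b <;>
    simp only [phaseP, lowp, fromBlocks, Matrix.single, one_apply, of_apply, Sum.elim_inl,
      Sum.elim_inr, Sum.inl.injEq, Sum.inr.injEq, Matrix.zero_apply, reduceCtorEq, and_false,
      false_and, if_false] <;>
  split_ifs <;> (try (obtain ⟨rfl, rfl⟩ := ‹_ = _ ∧ _ = _›)) <;> simp_all

def sq1 (i : Fin n) (a : ℝ) : Fin n → ℝ := fun j => if j = i then a else 1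

lemma squeezer_eq (i : Fin n) (a : ℝ) :
    squeezer n i a = dd (diagonal (sq1 i a⁻¹)) (diagonal (sq1 i a)) := by
  ext r c
  rcases r with x | x <;> rcases c with y | y <;>
    simp only [squeezer, dd, fromBlocks, sq1, diagonal_apply, one_apply, of_apply, Sum.elim_inl,
      Sum.elim_inr, Sum.inl.injEq, Sum.inr.injEq, Matrix.zero_apply, reduceCtorEq, and_false,
      false_and, if_false] <;>
  split_ifs <;> (try (obtain ⟨rfl, rfl⟩ := ‹_ = _ ∧ _ = _›)) <;> simp_all

lemma qndX_eq (i j : Fin n) (g : ℝ) (hij : i ≠ j) :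
    qndX n i j g = dd (transvection i j (-g)) (transvection j i g) := by
  ext r c
  rcases r with x | x <;> rcases c with y | y <;>
    simp only [qndX, dd, fromBlocks, transvection, Matrix.single, one_apply, of_apply,
      Sum.elim_inl, Sum.elim_inr, Sum.inl.injEq, Sum.inr.injEq, Matrix.zero_apply,
      Matrix.add_apply, reduceCtorEq, and_false, false_and, if_false] <;>
  split_ifs <;> (try (obtain ⟨rfl, rfl⟩ := ‹_ = _ ∧ _ = _›)) <;> simp_all

/-! ### Transvections -/

lemma transvection_transpose (i j : Fin n) (c : ℝ) :
    (transvection i j c)ᵀ = transvection j i c := by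
  unfold Matrix.transvection
  rw [transpose_add, transpose_one]
  congr 1
  ext a b
  simp [Matrix.single, transpose_apply, and_comm]

lemma transvection_inv (i j : Fin n) (hij : i ≠ j) (c : ℝ) :
    (transvection i j c)⁻¹ = transvection i j (-c) := by
  apply inv_eq_right_inv
  rw [transvection_mul_transvection_same _ _ hij, add_neg_cancel, transvection_zero]

lemma gen_qndX (i j : Fin n) (hij : i ≠ j) (g : ℝ) : Gen (qndX n i j g) :=
  Gen.of_gen (Or.inr (Or.inr (Or.inl ⟨i, j, g, hij, rfl⟩)))

lemma gen_phaseX (i : Fin n) (g : ℝ) : Gen (phaseX n i g) :=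
  Gen.of_gen (Or.inr (Or.inr (Or.inr (Or.inr (Or.inl ⟨i, g, rfl⟩)))))

lemma gen_phaseP (i : Fin n) (g : ℝ) : Gen (phaseP n i g) :=
  Gen.of_gen (Or.inr (Or.inr (Or.inr (Or.inr (Or.inr (Or.inl ⟨i, g, rfl⟩))))))

lemma gen_squeezer (i : Fin n) (a : ℝ) (ha : a ≠ 0) : Gen (squeezer n i a) :=
  Gen.of_gen (Or.inl ⟨i, a, ha, rfl⟩)

/-! ### Generation of block-diagonal symplectic matrices -/

def Φfun (P : Mn n) : MM n := dd (Pᵀ)⁻¹ P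

lemma Φfun_mul (P Q : Mn n) : Φfun (P * Q) = Φfun P * Φfun Q := by
  rw [Φfun, Φfun, Φfun, dd_mul, transpose_mul, Matrix.mul_inv_rev]

lemma Φfun_one : Φfun (1 : Mn n) = 1 := by
  rw [Φfun, transpose_one, inv_one, dd_one]

lemma gen_Φfun_transvection (t : TransvectionStruct (Fin n) ℝ) : Gen (Φfun t.toMatrix) := by
  obtain ⟨i, j, hij, c⟩ := t
  have h1 : (TransvectionStruct.mk i j hij c).toMatrix = transvection i j c := rfl
  rw [h1, Φfun, transvection_transpose, transvection_inv _ _ hij.symm]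
  rw [show dd (transvection j i (-c)) (transvection i j c) = qndX n j i c from by
    rw [qndX_eq j i c hij.symm]]
  exact gen_qndX j i hij.symm c

lemma gen_Φfun_list (L : List (TransvectionStruct (Fin n) ℝ)) :
    Gen (Φfun (L.map TransvectionStruct.toMatrix).prod) := by
  induction L with
  | nil => simpa [Φfun_one] using Gen.one
  | cons t L ih =>
      rw [List.map_cons, List.prod_cons, Φfun_mul]
      exact (gen_Φfun_transvection t).mul ih

def ddiagM (e : Fin n → ℝ) : MM n := dd (diagonal fun j => (e j)⁻¹) (diagonal e)

lemma ddiagM_mul (a b : Fin n → ℝ) : ddiagM (a * b) = ddiagM a * ddiagM b := by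
  unfold ddiagM
  rw [dd_mul, diagonal_mul_diagonal, diagonal_mul_diagonal]
  exact congrArg₂ dd (congrArg diagonal (funext fun j => mul_inv (a j) (b j))) rfl

lemma ddiagM_one : ddiagM (1 : Fin n → ℝ) = 1 := by
  unfold ddiagM
  show dd (diagonal fun j => ((1 : ℝ))⁻¹) (diagonal fun _ => (1 : ℝ)) = 1
  rw [show (fun j => ((1 : ℝ))⁻¹) = fun _ => (1 : ℝ) from funext fun _ => inv_one,
    diagonal_one, dd_one]

lemma gen_ddiag (d : Fin n → ℝ) (hd : ∀ j, d j ≠ 0) : Gen (ddiagM d) := by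
  have hrep : d = ∏ i : Fin n, sq1 i (d i) := by
    funext j
    rw [Finset.prod_apply]
    simp [sq1]
  rw [hrep]
  refine Finset.prod_induction (fun i => sq1 i (d i)) (fun e => Gen (ddiagM e)) ?_ ?_ ?_
  · intro a b ha hb
    rw [ddiagM_mul]; exact ha.mul hb
  · show Gen (ddiagM 1)
    rw [ddiagM_one]; exact Gen.one
  · intro i _
    have h : ddiagM (sq1 i (d i)) = squeezer n i (d i) := by
      unfold ddiagM
      rw [squeezer_eq]
      have e1 : (fun j => (sq1 i (d i) j)⁻¹) = sq1 i (d i)⁻¹ := by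
        funext j
        simp [sq1, apply_ite Inv.inv]
      rw [e1]
    rw [h]; exact gen_squeezer i (d i) (hd i)

lemma gen_Φfun (P : Mn n) (hP : IsUnit P.det) : Gen (Φfun P) := by
  obtain ⟨L, L', D, hPeq⟩ := Matrix.Pivot.exists_list_transvec_mul_diagonal_mul_list_transvec P
  have hDdet : IsUnit (diagonal D).det := by
    have h := hP
    rw [hPeq] at h
    simpa [det_mul] using h
  have hD : ∀ j, D j ≠ 0 := by
    intro j
    have h : (∏ i, D i) ≠ 0 := by
      simpa [det_diagonal, isUnit_iff_ne_zero] using hDdet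
    exact Finset.prod_ne_zero_iff.mp h j (Finset.mem_univ j)
  have hmid : Gen (Φfun (diagonal D)) := by
    have hinv : (diagonal D)⁻¹ = diagonal (fun j => (D j)⁻¹) := by
      apply inv_eq_right_inv
      rw [diagonal_mul_diagonal]
      rw [show (fun i => D i * (D i)⁻¹) = fun _ => (1 : ℝ) from
        funext fun j => mul_inv_cancel₀ (hD j), diagonal_one]
    rw [Φfun, diagonal_transpose, hinv]
    exact gen_ddiag D hD
  rw [hPeq, Φfun_mul, Φfun_mul]
  exact ((gen_Φfun_list L).mul hmid).mul (gen_Φfun_list L')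

lemma gen_dd_left (A : Mn n) (hA : IsUnit A.det) : Gen (dd A (Aᵀ)⁻¹) := by
  have hAT : IsUnit (Aᵀ).det := by rwa [det_transpose]
  have h1 : IsUnit ((Aᵀ)⁻¹).det := by
    rw [Matrix.det_nonsing_inv, Ring.inverse_eq_inv']
    simpa [isUnit_iff_ne_zero] using inv_ne_zero (isUnit_iff_ne_zero.mp hAT)
  have h3 := gen_Φfun ((Aᵀ)⁻¹) h1
  rw [Φfun, Matrix.transpose_nonsing_inv, transpose_transpose,
    Matrix.nonsing_inv_nonsing_inv _ hA] at h3
  exact h3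

/-! ### Generation of unipotent blocks `uhp S`, `lowp S` for symmetric `S` -/

lemma stdBasisMatrix_neg (i j : Fin n) (g : ℝ) :
    Matrix.single i j (-g) = -Matrix.single i j g := by
  ext a b
  simp only [Matrix.single, of_apply, Matrix.neg_apply]
  split_ifs <;> simp

lemma dd_uhp_conj (P Q B : Mn n) (h : P * Q = 1) :
    dd Qᵀ P * uhp B * dd Pᵀ Q = uhp (Qᵀ * B * Q) := by
  rw [uhp, uhp, dd, dd, fromBlocks_multiply, fromBlocks_multiply]
  simp [h, ← transpose_mul, Matrix.mul_assoc]

lemma dd_lowp_conj (P Q B : Mn n) (h : P * Q = 1) :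
    dd Qᵀ P * lowp B * dd Pᵀ Q = lowp (P * B * Pᵀ) := by
  rw [lowp, lowp, dd, dd, fromBlocks_multiply, fromBlocks_multiply]
  simp [h, ← transpose_mul, Matrix.mul_assoc]

lemma pair_expand (i j : Fin n) (g : ℝ) :
    transvection j i 1 * Matrix.single i i g * transvection i j 1 =
      Matrix.single i i g + Matrix.single i j g + Matrix.single j i g +
        Matrix.single j j g := by
  unfold Matrix.transvection
  simp only [Matrix.add_mul, Matrix.mul_add, Matrix.one_mul, Matrix.mul_one,
    Matrix.single_mul_single_same, one_mul, mul_one]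
  abel

lemma gen_uhp_pair (i j : Fin n) (hij : i ≠ j) (g : ℝ) :
    Gen (uhp (Matrix.single i i g + Matrix.single i j g + Matrix.single j i g +
      Matrix.single j j g)) := by
  have h : transvection i j (-1 : ℝ) * transvection i j (1 : ℝ) = 1 := by
    rw [transvection_mul_transvection_same _ _ hij, neg_add_cancel, transvection_zero]
  have hc := dd_uhp_conj (transvection i j (-1)) (transvection i j 1) (Matrix.single i i g) h
  rw [transvection_transpose, transvection_transpose] at hc
  rw [pair_expand i j g] at hc
  rw [← hc]
  rw [show dd (transvection j i 1) (transvection i j (-1)) = qndX n j i (-1) from by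
        rw [qndX_eq j i (-1) hij.symm]; norm_num]
  rw [show dd (transvection j i (-1)) (transvection i j 1) = qndX n j i 1 from by
        rw [qndX_eq j i 1 hij.symm]]
  rw [← phaseX_eq]
  exact ((gen_qndX _ _ hij.symm _).mul (gen_phaseX i g)).mul (gen_qndX _ _ hij.symm _)

lemma gen_lowp_pair (i j : Fin n) (hij : i ≠ j) (g : ℝ) :
    Gen (lowp (Matrix.single i i g + Matrix.single i j g + Matrix.single j i g +
      Matrix.single j j g)) := by
  have h : transvection j i (1 : ℝ) * transvection j i (-1 : ℝ) = 1 := by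
    rw [transvection_mul_transvection_same _ _ hij.symm, add_neg_cancel, transvection_zero]
  have hc := dd_lowp_conj (transvection j i 1) (transvection j i (-1)) (Matrix.single i i g) h
  rw [transvection_transpose, transvection_transpose] at hc
  rw [pair_expand i j g] at hc
  rw [← hc]
  rw [show dd (transvection i j (-1)) (transvection j i 1) = qndX n i j 1 from by
        rw [qndX_eq i j 1 hij]]
  rw [show dd (transvection i j 1) (transvection j i (-1)) = qndX n i j (-1) from by
        rw [qndX_eq i j (-1) hij]; norm_num]
  rw [← phaseP_eq]
  exact ((gen_qndX _ _ hij _).mul (gen_phaseP i g)).mul (gen_qndX _ _ hij _)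

lemma gen_uhp_offdiag (i j : Fin n) (hij : i ≠ j) (g : ℝ) :
    Gen (uhp (Matrix.single i j g + Matrix.single j i g)) := by
  have h1 := gen_uhp_pair i j hij g
  have h2 : Gen (uhp (Matrix.single i i (-g))) := by
    rw [← phaseX_eq]; exact gen_phaseX i (-g)
  have h3 : Gen (uhp (Matrix.single j j (-g))) := by
    rw [← phaseX_eq]; exact gen_phaseX j (-g)
  have h4 := (h1.mul h2).mul h3
  rw [uhp_mul, uhp_mul] at h4
  rw [show Matrix.single i i g + Matrix.single i j g + Matrix.single j i g +
      Matrix.single j j g + Matrix.single i i (-g) + Matrix.single j j (-g) =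
      Matrix.single i j g + Matrix.single j i g from by
    rw [stdBasisMatrix_neg, stdBasisMatrix_neg]; abel] at h4
  exact h4

lemma gen_lowp_offdiag (i j : Fin n) (hij : i ≠ j) (g : ℝ) :
    Gen (lowp (Matrix.single i j g + Matrix.single j i g)) := by
  have h1 := gen_lowp_pair i j hij g
  have h2 : Gen (lowp (Matrix.single i i (-g))) := by
    rw [← phaseP_eq]; exact gen_phaseP i (-g)
  have h3 : Gen (lowp (Matrix.single j j (-g))) := by
    rw [← phaseP_eq]; exact gen_phaseP j (-g)
  have h4 := (h1.mul h2).mul h3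
  rw [lowp_mul, lowp_mul] at h4
  rw [show Matrix.single i i g + Matrix.single i j g + Matrix.single j i g +
      Matrix.single j j g + Matrix.single i i (-g) + Matrix.single j j (-g) =
      Matrix.single i j g + Matrix.single j i g from by
    rw [stdBasisMatrix_neg, stdBasisMatrix_neg]; abel] at h4
  exact h4

lemma gen_uhp_sum {ι : Type*} (s : Finset ι) (f : ι → Mn n)
    (h : ∀ i ∈ s, Gen (uhp (f i))) : Gen (uhp (∑ i ∈ s, f i)) := by
  classical
  refine Finset.sum_induction f (fun B => Gen (uhp B)) ?_ ?_ h
  · intro a b ha hb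
    rw [← uhp_mul]; exact ha.mul hb
  · show Gen (uhp 0)
    rw [uhp_zero]; exact Gen.one

lemma gen_lowp_sum {ι : Type*} (s : Finset ι) (f : ι → Mn n)
    (h : ∀ i ∈ s, Gen (lowp (f i))) : Gen (lowp (∑ i ∈ s, f i)) := by
  classical
  refine Finset.sum_induction f (fun B => Gen (lowp B)) ?_ ?_ h
  · intro a b ha hb
    rw [← lowp_mul]; exact ha.mul hb
  · show Gen (lowp 0)
    rw [lowp_zero]; exact Gen.one

lemma symm_eq_sum (S : Mn n) (hS : Sᵀ = S) :
    S = ∑ i : Fin n, ∑ j : Fin n,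
      (Matrix.single i j (S i j / 2) + Matrix.single j i (S i j / 2)) := by
  have hsym : ∀ a b, S a b = S b a := by
    intro a b
    conv_lhs => rw [← hS]
    rfl
  ext a b
  simp only [Matrix.sum_apply, Matrix.add_apply, Matrix.single, of_apply,
    Finset.sum_add_distrib]
  have key1 : (∑ x : Fin n, ∑ y : Fin n, if x = a ∧ y = b then S x y / 2 else 0)
      = S a b / 2 := by
    rw [Finset.sum_eq_single a (fun x _ hx => Finset.sum_eq_zero fun y _ => by simp [hx])
        (by simp)]
    rw [Finset.sum_eq_single b (fun y _ hy => by simp [hy]) (by simp)]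
    simp
  have key2 : (∑ x : Fin n, ∑ y : Fin n, if y = a ∧ x = b then S x y / 2 else 0)
      = S b a / 2 := by
    rw [Finset.sum_eq_single b (fun x _ hx => Finset.sum_eq_zero fun y _ => by simp [hx])
        (by simp)]
    rw [Finset.sum_eq_single a (fun y _ hy => by simp [hy]) (by simp)]
    simp
  rw [key1, key2, hsym b a]
  ring

lemma gen_uhp_symm (S : Mn n) (hS : Sᵀ = S) : Gen (uhp S) := by
  rw [symm_eq_sum S hS]
  refine gen_uhp_sum _ _ fun i _ => gen_uhp_sum _ _ fun j _ => ?_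
  by_cases hij : i = j
  · subst hij
    rw [← Matrix.single_add, ← phaseX_eq]
    exact gen_phaseX i _
  · exact gen_uhp_offdiag i j hij _

lemma gen_lowp_symm (S : Mn n) (hS : Sᵀ = S) : Gen (lowp S) := by
  rw [symm_eq_sum S hS]
  refine gen_lowp_sum _ _ fun i _ => gen_lowp_sum _ _ fun j _ => ?_
  by_cases hij : i = j
  · subst hij
    rw [← Matrix.single_add, ← phaseP_eq]
    exact gen_phaseP i _
  · exact gen_lowp_offdiag i j hij _

/-! ### Symplectic matrix algebra -/

lemma J_eq : J n = fromBlocks (0 : Mn n) 1 (-1) 0 := rfl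

lemma J_mul_negJ : J n * (-(J n)) = 1 := by
  show fromBlocks (0 : Mn n) 1 (-1) 0 * (-(fromBlocks (0 : Mn n) 1 (-1) 0)) = 1
  rw [fromBlocks_neg, fromBlocks_multiply]
  simp

lemma negJ_mul_J : (-(J n)) * J n = 1 := by
  show (-(fromBlocks (0 : Mn n) 1 (-1) 0)) * fromBlocks (0 : Mn n) 1 (-1) 0 = 1
  rw [fromBlocks_neg, fromBlocks_multiply]
  simp

lemma isSymplectic_mul {X Y : MM n} (hX : IsSymplectic X) (hY : IsSymplectic Y) :
    IsSymplectic (X * Y) := by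
  unfold IsSymplectic at *
  rw [transpose_mul]
  have h : Yᵀ * Xᵀ * J n * (X * Y) = Yᵀ * (Xᵀ * J n * X) * Y := by
    simp only [Matrix.mul_assoc]
  rw [h, hX]
  exact hY

lemma isSymplectic_det {Y : MM n} (h : IsSymplectic Y) : IsUnit Y.det := by
  unfold IsSymplectic at h
  have hJ : (J n).det ≠ 0 :=
    (Matrix.isUnit_det_of_right_inverse (J_mul_negJ (n := n))).ne_zero
  have hd := congrArg Matrix.det h
  rw [det_mul, det_mul, det_transpose] at hd
  rw [isUnit_iff_ne_zero]
  intro h0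
  rw [h0] at hd
  simp only [zero_mul, mul_zero] at hd
  exact hJ hd.symm

lemma isSymplectic_transpose_rel {Y : MM n} (h : IsSymplectic Y) : Y * J n * Yᵀ = J n := by
  have h2 : (-(J n) * Yᵀ * J n) * Y = 1 := by
    have e : (-(J n) * Yᵀ * J n) * Y = -(J n) * (Yᵀ * J n * Y) := by
      simp only [Matrix.mul_assoc]
    rw [e, h]
    exact negJ_mul_J
  have h3 : Y * (-(J n) * Yᵀ * J n) = 1 := mul_eq_one_comm.mp h2
  have h4 : (Y * -(J n) * Yᵀ) * J n = 1 := by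
    rw [← h3]
    simp only [Matrix.mul_assoc]
  have h5 := congrArg (fun M => M * (-(J n))) h4
  simp only [Matrix.one_mul] at h5
  rw [Matrix.mul_assoc (Y * -(J n) * Yᵀ), J_mul_negJ, Matrix.mul_one] at h5
  have h6 : -(Y * J n * Yᵀ) = -(J n) := by
    rw [← h5]
    simp only [Matrix.mul_neg, Matrix.neg_mul]
  exact neg_injective h6

lemma blocks_of_eq {A B C D A' B' C' D' : Mn n}
    (h : fromBlocks A B C D = fromBlocks A' B' C' D') :
    A = A' ∧ B = B' ∧ C = C' ∧ D = D' := by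
  refine ⟨?_, ?_, ?_, ?_⟩
  · have h1 := congrArg Matrix.toBlocks₁₁ h
    simpa [toBlocks_fromBlocks₁₁] using h1
  · have h1 := congrArg Matrix.toBlocks₁₂ h
    simpa [toBlocks_fromBlocks₁₂] using h1
  · have h1 := congrArg Matrix.toBlocks₂₁ h
    simpa [toBlocks_fromBlocks₂₁] using h1
  · have h1 := congrArg Matrix.toBlocks₂₂ h
    simpa [toBlocks_fromBlocks₂₂] using h1

lemma symp_identities {A B C D : Mn n} (h : IsSymplectic (fromBlocks A B C D)) :
    Aᵀ * C = Cᵀ * A ∧ Aᵀ * D - Cᵀ * B = 1 ∧ A * Bᵀ = B * Aᵀ := by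
  have ht := isSymplectic_transpose_rel h
  unfold IsSymplectic at h
  rw [J_eq, fromBlocks_transpose, fromBlocks_multiply, fromBlocks_multiply] at h
  simp only [Matrix.mul_zero, Matrix.zero_mul, Matrix.mul_one, Matrix.one_mul,
    Matrix.mul_neg, Matrix.neg_mul, add_zero, zero_add, mul_neg_one, neg_zero] at h
  rw [J_eq, fromBlocks_transpose, fromBlocks_multiply, fromBlocks_multiply] at ht
  simp only [Matrix.mul_zero, Matrix.zero_mul, Matrix.mul_one, Matrix.one_mul,
    Matrix.mul_neg, Matrix.neg_mul, add_zero, zero_add, mul_neg_one, neg_zero] at ht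
  obtain ⟨h11, h12, -, -⟩ := blocks_of_eq h
  obtain ⟨t11, -, -, -⟩ := blocks_of_eq ht
  refine ⟨?_, ?_, ?_⟩
  · rw [neg_add_eq_sub, sub_eq_zero] at h11
    exact h11
  · rw [neg_add_eq_sub] at h12
    exact h12
  · rw [neg_add_eq_sub, sub_eq_zero] at t11
    exact t11

/-! ### A symmetric correction making the top-left block invertible -/

lemma isUnit_det_of_trivial_ker (M : Mn n) (h : ∀ x, M.mulVec x = 0 → x = 0) :
    IsUnit M.det := by
  rw [isUnit_iff_ne_zero]
  intro h0
  obtain ⟨v, hv, hMv⟩ := Matrix.exists_mulVec_eq_zero_iff.mpr h0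
  exact hv (h v hMv)

lemma exists_symm_compl (A C : Mn n) (hAC : Aᵀ * C = Cᵀ * A)
    (hker : ∀ x, A.mulVec x = 0 → C.mulVec x = 0 → x = 0) :
    ∃ S : Mn n, Sᵀ = S ∧ IsUnit (A + S * C).det := by
  classical
  set K : Submodule ℝ (EuclideanSpace ℝ (Fin n)) :=
    LinearMap.range (Matrix.toEuclideanLin A) with hK
  set prj : EuclideanSpace ℝ (Fin n) →ₗ[ℝ] EuclideanSpace ℝ (Fin n) :=
    K.subtype ∘ₗ (K.orthogonalProjectionOnto : EuclideanSpace ℝ (Fin n) →L[ℝ] K).toLinearMap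
    with hprj
  set S : Mn n := Matrix.toEuclideanLin.symm (LinearMap.id - prj) with hSdef
  have hS_apply : ∀ v : EuclideanSpace ℝ (Fin n),
      Matrix.toEuclideanLin S v
        = v - (K.orthogonalProjectionOnto v : EuclideanSpace ℝ (Fin n)) := by
    intro v
    rw [hSdef, LinearEquiv.apply_symm_apply]
    rfl
  have hSsymm : Sᵀ = S := by
    have hherm : S.IsHermitian := by
      rw [Matrix.isHermitian_iff_isSymmetric]
      intro x y
      rw [hS_apply, hS_apply]
      simp only [inner_sub_left, inner_sub_right]
      simp only [← Submodule.starProjection_apply]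
      rw [Submodule.inner_starProjection_left_eq_right]
    rw [← Matrix.conjTranspose_eq_transpose_of_trivial]
    exact hherm
  have hSA : S * A = 0 := by
    apply Matrix.toEuclideanLin.injective
    rw [map_zero, Matrix.toEuclideanLin_eq_toLin,
      Matrix.toLin_mul (PiLp.basisFun 2 ℝ (Fin n)) (PiLp.basisFun 2 ℝ (Fin n)) _]
    refine LinearMap.ext fun v => ?_
    rw [LinearMap.comp_apply, LinearMap.zero_apply]
    show Matrix.toEuclideanLin S (Matrix.toEuclideanLin A v) = 0
    rw [hS_apply, sub_eq_zero]
    exact ((Submodule.starProjection_eq_self_iff (K := K)).mpr (LinearMap.mem_range_self _ v)).symm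
  have hrange : ∀ y : Fin n → ℝ, S.mulVec y = 0 → ∃ z : Fin n → ℝ, A.mulVec z = y := by
    intro y hy
    set y' : EuclideanSpace ℝ (Fin n) := (WithLp.equiv 2 (Fin n → ℝ)).symm y with hy'
    have h1 : Matrix.toEuclideanLin S y' = 0 := by
      rw [hy']
      show (WithLp.equiv 2 (Fin n → ℝ)).symm (S.mulVec y) = 0
      rw [hy]
      rfl
    rw [hS_apply, sub_eq_zero] at h1
    have h2 : y' ∈ K := by
      rw [h1]
      exact Submodule.coe_mem _
    obtain ⟨z', hz'⟩ := h2
    refine ⟨WithLp.equiv 2 (Fin n → ℝ) z', ?_⟩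
    have h3 : Matrix.toEuclideanLin A ((WithLp.equiv 2 (Fin n → ℝ)).symm
        (WithLp.equiv 2 (Fin n → ℝ) z')) = y' := by
      rw [Equiv.symm_apply_apply]
      exact hz'
    change (WithLp.equiv 2 (Fin n → ℝ)).symm (A.mulVec (WithLp.equiv 2 (Fin n → ℝ) z')) = y' at h3
    rw [hy'] at h3
    exact (WithLp.equiv 2 (Fin n → ℝ)).symm.injective h3
  refine ⟨S, hSsymm, isUnit_det_of_trivial_ker _ ?_⟩
  intro x hx
  rw [Matrix.add_mulVec, ← Matrix.mulVec_mulVec] at hx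
  have hAx : A.mulVec x = 0 := by
    have h0 := congrArg (fun v => dotProduct (A.mulVec x) v) hx
    simp only [dotProduct_add, dotProduct_zero] at h0
    have h1 : dotProduct (A.mulVec x) (S.mulVec (C.mulVec x)) = 0 := by
      rw [Matrix.dotProduct_mulVec]
      have h2 : Matrix.vecMul (A.mulVec x) S = 0 := by
        rw [← hSsymm, Matrix.vecMul_transpose, Matrix.mulVec_mulVec, hSA, Matrix.zero_mulVec]
      rw [h2, zero_dotProduct]
    rw [h1, add_zero] at h0
    exact dotProduct_self_eq_zero.mp h0
  have hSCx : S.mulVec (C.mulVec x) = 0 := by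
    rw [hAx, zero_add] at hx
    exact hx
  obtain ⟨z, hz⟩ := hrange _ hSCx
  have hCx : C.mulVec x = 0 := by
    have e := congrArg (fun v => dotProduct (C.mulVec x) v) hz.symm
    have h0 : dotProduct (C.mulVec x) (C.mulVec x) = 0 := by
      rw [e, Matrix.dotProduct_mulVec, ← Matrix.mulVec_transpose, Matrix.mulVec_mulVec, hAC,
        ← Matrix.mulVec_mulVec, hAx, Matrix.mulVec_zero, zero_dotProduct]
    exact dotProduct_self_eq_zero.mp h0
  exact hker x hAx hCx

/-! ### Decomposition with invertible top-left block -/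

lemma isSymplectic_uhp (S : Mn n) (hS : Sᵀ = S) : IsSymplectic (uhp S) := by
  unfold IsSymplectic
  rw [J_eq, uhp, fromBlocks_transpose, fromBlocks_multiply, fromBlocks_multiply]
  simp only [Matrix.mul_zero, Matrix.zero_mul, Matrix.mul_one, Matrix.one_mul,
    Matrix.mul_neg, Matrix.neg_mul, add_zero, zero_add, mul_neg_one, neg_zero,
    transpose_zero, transpose_one, hS]
  rw [show -S + S = (0 : Mn n) from by abel]

lemma gen_of_block (A B C D : Mn n) (hsymp : IsSymplectic (fromBlocks A B C D))
    (hA : IsUnit A.det) : Gen (fromBlocks A B C D) := by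
  obtain ⟨e1, e2, f1⟩ := symp_identities hsymp
  have hAT : IsUnit (Aᵀ).det := by rwa [det_transpose]
  have h1 : Aᵀ * (C * A⁻¹) = Cᵀ := by
    rw [← Matrix.mul_assoc, e1, Matrix.mul_nonsing_inv_cancel_right _ _ hA]
  have hCA : (Aᵀ)⁻¹ * Cᵀ = C * A⁻¹ := by
    rw [← h1, Matrix.nonsing_inv_mul_cancel_left _ _ hAT]
  have hSsym : (C * A⁻¹)ᵀ = C * A⁻¹ := by
    rw [transpose_mul, Matrix.transpose_nonsing_inv]
    exact hCA
  have hTsym : (A⁻¹ * B)ᵀ = A⁻¹ * B := by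
    rw [transpose_mul, Matrix.transpose_nonsing_inv]
    have h2 : A⁻¹ * (B * Aᵀ) = Bᵀ := by
      rw [← f1, Matrix.nonsing_inv_mul_cancel_left _ _ hA]
    rw [← h2, Matrix.mul_assoc, Matrix.mul_nonsing_inv_cancel_right _ _ hAT]
  have hD : D = C * A⁻¹ * B + (Aᵀ)⁻¹ := by
    have h2 : Aᵀ * D = 1 + Cᵀ * B := sub_eq_iff_eq_add.mp e2
    have h3 : D = (Aᵀ)⁻¹ * (1 + Cᵀ * B) := by
      rw [← h2, Matrix.nonsing_inv_mul_cancel_left _ _ hAT]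
    rw [h3, Matrix.mul_add, Matrix.mul_one, ← Matrix.mul_assoc, hCA, add_comm]
  have key : fromBlocks A B C D = lowp (C * A⁻¹) * dd A (Aᵀ)⁻¹ * uhp (A⁻¹ * B) := by
    rw [lowp, dd, uhp, fromBlocks_multiply, fromBlocks_multiply]
    simp only [Matrix.one_mul, Matrix.mul_one, Matrix.zero_mul, Matrix.mul_zero, add_zero,
      zero_add]
    rw [Matrix.mul_nonsing_inv_cancel_left _ _ hA, Matrix.nonsing_inv_mul_cancel_right _ _ hA,
      ← Matrix.mul_assoc, ← hD]
  rw [key]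
  exact ((gen_lowp_symm _ hSsym).mul (gen_dd_left A hA)).mul (gen_uhp_symm _ hTsym)

end SympGenAux

open SympGenAux in
/-- Every symplectic `2n × 2n` real matrix is a finite (ordered) product of the
elementary one- and two-mode generator matrices: these gates generate
`Sp(2n, ℝ)`. -/
theorem symplectic_generated_by_linear_optics (n : ℕ)
    (Υ : Matrix (Fin n ⊕ Fin n) (Fin n ⊕ Fin n) ℝ) (hΥ : IsSymplectic Υ) :
    ∃ L : List (Matrix (Fin n ⊕ Fin n) (Fin n ⊕ Fin n) ℝ),
      (∀ M ∈ L, IsGenerator M) ∧ Υ = L.prod := by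
  classical
  set A := Υ.toBlocks₁₁ with hA
  set B := Υ.toBlocks₁₂ with hB
  set C := Υ.toBlocks₂₁ with hC
  set D := Υ.toBlocks₂₂ with hD
  have hblocks : Υ = fromBlocks A B C D := (fromBlocks_toBlocks Υ).symm
  rw [hblocks] at hΥ
  obtain ⟨e1, e2, -⟩ := symp_identities hΥ
  have hker : ∀ x, A.mulVec x = 0 → C.mulVec x = 0 → x = 0 := by
    intro x hx1 hx2
    have e2t : Dᵀ * A - Bᵀ * C = 1 := by
      have h := congrArg Matrix.transpose e2
      rwa [transpose_sub, transpose_mul, transpose_mul, transpose_transpose,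
        transpose_transpose, transpose_one] at h
    calc x = (1 : Mn n).mulVec x := (Matrix.one_mulVec x).symm
    _ = (Dᵀ * A - Bᵀ * C).mulVec x := by rw [e2t]
    _ = Dᵀ.mulVec (A.mulVec x) - Bᵀ.mulVec (C.mulVec x) := by
        rw [Matrix.sub_mulVec, Matrix.mulVec_mulVec, Matrix.mulVec_mulVec]
    _ = 0 := by rw [hx1, hx2, Matrix.mulVec_zero, Matrix.mulVec_zero, sub_zero]
  obtain ⟨S, hSsym, hunit⟩ := exists_symm_compl A C e1 hker
  have h1 : IsSymplectic (uhp S * fromBlocks A B C D) :=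
    isSymplectic_mul (isSymplectic_uhp S hSsym) hΥ
  have h2 : uhp S * fromBlocks A B C D = fromBlocks (A + S * C) (B + S * D) C D := by
    rw [uhp, fromBlocks_multiply]
    simp only [Matrix.one_mul, Matrix.zero_mul, Matrix.mul_one, zero_add, add_zero]
  rw [h2] at h1
  have h3 : Gen (fromBlocks (A + S * C) (B + S * D) C D) := gen_of_block _ _ _ _ h1 hunit
  have h4 : Gen (uhp (-S)) := gen_uhp_symm _ (by rw [transpose_neg, hSsym])
  have h5 : uhp (-S) * (uhp S * fromBlocks A B C D) = fromBlocks A B C D := by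
    rw [← Matrix.mul_assoc, uhp_mul, neg_add_cancel, uhp_zero, Matrix.one_mul]
  have h6 : Gen (fromBlocks A B C D) := by
    rw [← h5, h2]
    exact h4.mul h3
  rw [hblocks]
  exact h6
end
end

section
/- Let n ≥ 1 and let Υ be a symplectic 2n×2n real matrix. Then there exists a finite product G of the generator matrices (squeezers S_i(a) with a ≠ 0, Fourier transforms F_i, QND interactions Q^X_{ij}(g) and Q^P_{ij}(g), phase gates P^X_i(g) and P^P_i(g), and mode swaps σ_{ij}) such that (GΥ) e_1 = e_1 and (GΥ) e_{n+1} = e_{n+1}; i.e., the first column of GΥ equals e_1 and its (n+1)-st column equals e_{n+1}. -/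
open Matrix BigOperators

noncomputable section

namespace GaussAux
open Sum
variable {n : ℕ}

lemma mulVec_apply (M : Matrix (Fin n ⊕ Fin n) (Fin n ⊕ Fin n) ℝ) (u : Fin n ⊕ Fin n → ℝ)
    (r : Fin n ⊕ Fin n) : M.mulVec u r = ∑ c, M r c * u c := rfl

lemma squeezer_mulVec (i : Fin n) (a : ℝ) (u : Fin n ⊕ Fin n → ℝ) (r : Fin n ⊕ Fin n) :
    (squeezer n i a).mulVec u r =
      if r = inl i then a⁻¹ * u (inl i)
      else if r = inr i then a * u (inr i) else u r := by
  rw [mulVec_apply]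
  split_ifs with h1 h2
  · subst h1
    rw [Fintype.sum_eq_single (inl i : Fin n ⊕ Fin n)]
    · simp [squeezer]
    · intro c hc; simp [squeezer, hc, Ne.symm hc]
  · subst h2
    rw [Fintype.sum_eq_single (inr i : Fin n ⊕ Fin n)]
    · simp [squeezer]
    · intro c hc; simp [squeezer, hc, Ne.symm hc]
  · rw [Fintype.sum_eq_single r]
    · simp [squeezer, h1, h2]
    · intro c hc; simp [squeezer, h1, h2, Ne.symm hc]

lemma fourierGate_mulVec (i : Fin n) (u : Fin n ⊕ Fin n → ℝ) (r : Fin n ⊕ Fin n) :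
    (fourierGate n i).mulVec u r =
      if r = inl i then u (inr i)
      else if r = inr i then -u (inl i) else u r := by
  rw [mulVec_apply]
  split_ifs with h1 h2
  · subst h1
    rw [Fintype.sum_eq_single (inr i : Fin n ⊕ Fin n)]
    · simp [fourierGate]
    · intro c hc; simp [fourierGate, hc, Ne.symm hc]
  · subst h2
    rw [Fintype.sum_eq_single (inl i : Fin n ⊕ Fin n)]
    · simp [fourierGate]
    · intro c hc; simp [fourierGate, hc, Ne.symm hc]
  · rw [Fintype.sum_eq_single r]
    · simp [fourierGate, h1, h2]
    · intro c hc; simp [fourierGate, h1, h2, Ne.symm hc]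

lemma qndX_mulVec (i j : Fin n) (hij : i ≠ j) (g : ℝ) (u : Fin n ⊕ Fin n → ℝ)
    (r : Fin n ⊕ Fin n) :
    (qndX n i j g).mulVec u r =
      if r = inr j then u (inr j) + g * u (inr i)
      else if r = inl i then u (inl i) - g * u (inl j) else u r := by
  rw [mulVec_apply]
  split_ifs with h1 h2
  · subst h1
    rw [Fintype.sum_eq_add (inr j : Fin n ⊕ Fin n) (inr i)]
    · simp [qndX, hij, Ne.symm hij]; try ring
    · simp [hij, Ne.symm hij]
    · intro c hc; simp [qndX, hc.1, hc.2, Ne.symm hc.1, Ne.symm hc.2, hij, Ne.symm hij]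
  · subst h2
    rw [Fintype.sum_eq_add (inl i : Fin n ⊕ Fin n) (inl j)]
    · simp [qndX, hij, Ne.symm hij]; try ring
    · simp [hij]
    · intro c hc; simp [qndX, hc.1, hc.2, Ne.symm hc.1, Ne.symm hc.2, hij, Ne.symm hij]
  · rw [Fintype.sum_eq_single r]
    · simp [qndX, h1, h2]
    · intro c hc; simp [qndX, h1, h2, hc, Ne.symm hc]

lemma qndP_mulVec (i j : Fin n) (hij : i ≠ j) (g : ℝ) (u : Fin n ⊕ Fin n → ℝ)
    (r : Fin n ⊕ Fin n) :
    (qndP n i j g).mulVec u r =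
      if r = inr i then u (inr i) - g * u (inr j)
      else if r = inl j then u (inl j) + g * u (inl i) else u r := by
  rw [mulVec_apply]
  split_ifs with h1 h2
  · subst h1
    rw [Fintype.sum_eq_add (inr i : Fin n ⊕ Fin n) (inr j)]
    · simp [qndP, hij, Ne.symm hij]; try ring
    · simp [hij]
    · intro c hc; simp [qndP, hc.1, hc.2, Ne.symm hc.1, Ne.symm hc.2, hij, Ne.symm hij]
  · subst h2
    rw [Fintype.sum_eq_add (inl j : Fin n ⊕ Fin n) (inl i)]
    · simp [qndP, hij, Ne.symm hij]; try ring
    · simp [Ne.symm hij]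
    · intro c hc; simp [qndP, hc.1, hc.2, Ne.symm hc.1, Ne.symm hc.2, hij, Ne.symm hij]
  · rw [Fintype.sum_eq_single r]
    · simp [qndP, h1, h2]
    · intro c hc; simp [qndP, h1, h2, hc, Ne.symm hc]

lemma phaseX_mulVec (i : Fin n) (g : ℝ) (u : Fin n ⊕ Fin n → ℝ) (r : Fin n ⊕ Fin n) :
    (phaseX n i g).mulVec u r =
      if r = inl i then u (inl i) + g * u (inr i) else u r := by
  rw [mulVec_apply]
  split_ifs with h1
  · subst h1
    rw [Fintype.sum_eq_add (inl i : Fin n ⊕ Fin n) (inr i)]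
    · simp [phaseX]; try ring
    · simp
    · intro c hc; simp [phaseX, hc.1, hc.2, Ne.symm hc.1, Ne.symm hc.2]
  · rw [Fintype.sum_eq_single r]
    · simp [phaseX, h1]
    · intro c hc; simp [phaseX, h1, hc, Ne.symm hc]

lemma phaseP_mulVec (i : Fin n) (g : ℝ) (u : Fin n ⊕ Fin n → ℝ) (r : Fin n ⊕ Fin n) :
    (phaseP n i g).mulVec u r =
      if r = inr i then u (inr i) + g * u (inl i) else u r := by
  rw [mulVec_apply]
  split_ifs with h1
  · subst h1
    rw [Fintype.sum_eq_add (inr i : Fin n ⊕ Fin n) (inl i)]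
    · simp [phaseP]; try ring
    · simp
    · intro c hc; simp [phaseP, hc.1, hc.2, Ne.symm hc.1, Ne.symm hc.2]
  · rw [Fintype.sum_eq_single r]
    · simp [phaseP, h1]
    · intro c hc; simp [phaseP, h1, hc, Ne.symm hc]

lemma modeSwap_mulVec (i j : Fin n) (u : Fin n ⊕ Fin n → ℝ) (r : Fin n ⊕ Fin n) :
    (modeSwap n i j).mulVec u r = u (Sum.map (Equiv.swap i j) (Equiv.swap i j) r) := by
  rw [mulVec_apply]
  rw [Fintype.sum_eq_single (Sum.map (Equiv.swap i j) (Equiv.swap i j) r)]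
  · simp [modeSwap]
  · intro c hc; simp [modeSwap, hc, Ne.symm hc]

lemma sum_eq_of_two (a b : Fin n) (hab : a ≠ b) (f g : Fin n → ℝ)
    (h : ∀ c, c ≠ a → c ≠ b → f c = g c) (h2 : f a + f b = g a + g b) :
    ∑ c, f c = ∑ c, g c := by
  have key : ∀ f : Fin n → ℝ, ∑ c, f c = f a + (f b + ∑ c ∈ (Finset.univ.erase a).erase b, f c) := by
    intro f
    rw [Finset.add_sum_erase _ f
      (Finset.mem_erase.mpr ⟨Ne.symm hab, Finset.mem_univ b⟩),
      Finset.add_sum_erase _ f (Finset.mem_univ a)]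
  rw [key f, key g, ← add_assoc, ← add_assoc, h2]
  congr 1
  apply Finset.sum_congr rfl
  intro c hc
  simp only [Finset.mem_erase] at hc
  exact h c hc.2.1 hc.1

lemma symp_squeezer (i : Fin n) (a : ℝ) (ha : a ≠ 0) (u v : Fin n ⊕ Fin n → ℝ) :
    symp ((squeezer n i a).mulVec u) ((squeezer n i a).mulVec v) = symp u v := by
  unfold symp
  apply Finset.sum_congr rfl
  intro k _
  by_cases hk : k = i
  · subst hk; simp [squeezer_mulVec]; field_simp
  · simp [squeezer_mulVec, hk]

lemma symp_fourier (i : Fin n) (u v : Fin n ⊕ Fin n → ℝ) :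
    symp ((fourierGate n i).mulVec u) ((fourierGate n i).mulVec v) = symp u v := by
  unfold symp
  apply Finset.sum_congr rfl
  intro k _
  by_cases hk : k = i
  · subst hk; simp [fourierGate_mulVec]; ring
  · simp [fourierGate_mulVec, hk]

lemma symp_phaseX (i : Fin n) (g : ℝ) (u v : Fin n ⊕ Fin n → ℝ) :
    symp ((phaseX n i g).mulVec u) ((phaseX n i g).mulVec v) = symp u v := by
  unfold symp
  apply Finset.sum_congr rfl
  intro k _
  by_cases hk : k = i
  · subst hk; simp [phaseX_mulVec]; ring
  · simp [phaseX_mulVec, hk]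

lemma symp_phaseP (i : Fin n) (g : ℝ) (u v : Fin n ⊕ Fin n → ℝ) :
    symp ((phaseP n i g).mulVec u) ((phaseP n i g).mulVec v) = symp u v := by
  unfold symp
  apply Finset.sum_congr rfl
  intro k _
  by_cases hk : k = i
  · subst hk; simp [phaseP_mulVec]; ring
  · simp [phaseP_mulVec, hk]

lemma symp_modeSwap (i j : Fin n) (u v : Fin n ⊕ Fin n → ℝ) :
    symp ((modeSwap n i j).mulVec u) ((modeSwap n i j).mulVec v) = symp u v := by
  unfold symp
  simp only [modeSwap_mulVec, Sum.map_inl, Sum.map_inr]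
  exact Fintype.sum_equiv (Equiv.swap i j) _ _ (fun k => rfl)

lemma symp_qndX (i j : Fin n) (hij : i ≠ j) (g : ℝ) (u v : Fin n ⊕ Fin n → ℝ) :
    symp ((qndX n i j g).mulVec u) ((qndX n i j g).mulVec v) = symp u v := by
  unfold symp
  apply sum_eq_of_two i j hij
  · intro c hci hcj; simp [qndX_mulVec i j hij, hci, hcj]
  · simp [qndX_mulVec i j hij, hij, Ne.symm hij]; ring

lemma symp_qndP (i j : Fin n) (hij : i ≠ j) (g : ℝ) (u v : Fin n ⊕ Fin n → ℝ) :
    symp ((qndP n i j g).mulVec u) ((qndP n i j g).mulVec v) = symp u v := by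
  unfold symp
  apply sum_eq_of_two i j hij
  · intro c hci hcj; simp [qndP_mulVec i j hij, hci, hcj]
  · simp [qndP_mulVec i j hij, hij, Ne.symm hij]; ring

lemma symp_gen {M : Matrix (Fin n ⊕ Fin n) (Fin n ⊕ Fin n) ℝ} (hM : IsGenerator M)
    (u v : Fin n ⊕ Fin n → ℝ) :
    symp (M.mulVec u) (M.mulVec v) = symp u v := by
  rcases hM with ⟨i, a, ha, rfl⟩ | ⟨i, rfl⟩ | ⟨i, j, g, hij, rfl⟩ | ⟨i, j, g, hij, rfl⟩ |
    ⟨i, g, rfl⟩ | ⟨i, g, rfl⟩ | ⟨i, j, rfl⟩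
  · exact symp_squeezer i a ha u v
  · exact symp_fourier i u v
  · exact symp_qndX i j hij g u v
  · exact symp_qndP i j hij g u v
  · exact symp_phaseX i g u v
  · exact symp_phaseP i g u v
  · exact symp_modeSwap i j u v

lemma symp_list {L : List (Matrix (Fin n ⊕ Fin n) (Fin n ⊕ Fin n) ℝ)}
    (hL : ∀ M ∈ L, IsGenerator M) (u v : Fin n ⊕ Fin n → ℝ) :
    symp (L.prod.mulVec u) (L.prod.mulVec v) = symp u v := by
  induction L generalizing u v with
  | nil => simp
  | cons M L ih =>
    rw [List.prod_cons, ← Matrix.mulVec_mulVec, ← Matrix.mulVec_mulVec]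
    rw [symp_gen (hL M List.mem_cons_self) _ _]
    exact ih (fun N hN => hL N (List.mem_cons_of_mem M hN)) u v

lemma fixes_list {L : List (Matrix (Fin n ⊕ Fin n) (Fin n ⊕ Fin n) ℝ)}
    {w : Fin n ⊕ Fin n → ℝ} (hL : ∀ M ∈ L, M.mulVec w = w) : L.prod.mulVec w = w := by
  induction L with
  | nil => simp
  | cons M L ih =>
    rw [List.prod_cons, ← Matrix.mulVec_mulVec,
      ih (fun N hN => hL N (List.mem_cons_of_mem M hN)), hL M List.mem_cons_self]

lemma symp_single_left (z : Fin n) (w : Fin n ⊕ Fin n → ℝ) :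
    symp (Pi.single (inl z) 1) w = w (inr z) := by
  unfold symp
  rw [Fintype.sum_eq_single z]
  · simp
  · intro c hc; simp [Pi.single_apply, hc]

lemma symp_cols {Υ : Matrix (Fin n ⊕ Fin n) (Fin n ⊕ Fin n) ℝ} (hΥ : IsSymplectic Υ)
    (z : Fin n) :
    symp (Υ.mulVec (Pi.single (inl z) 1)) (Υ.mulVec (Pi.single (inr z) 1)) = 1 := by
  have h := congrFun (congrFun hΥ (inl z)) (inr z)
  simp only [Matrix.mul_apply, Matrix.transpose_apply, _root_.J, Matrix.fromBlocks_apply₁₁,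
    Matrix.fromBlocks_apply₁₂, Matrix.fromBlocks_apply₂₁, Matrix.fromBlocks_apply₂₂,
    Fintype.sum_sum_type, Matrix.one_apply, Matrix.neg_apply, Matrix.zero_apply] at h
  simp at h
  unfold symp
  simp only [Matrix.mulVec_single, mul_one, MulOpposite.op_one, one_smul, Matrix.col_apply]
  rw [Finset.sum_sub_distrib]
  linarith [h]

lemma prod_three_mulVec (A B C : Matrix (Fin n ⊕ Fin n) (Fin n ⊕ Fin n) ℝ)
    (u : Fin n ⊕ Fin n → ℝ) :
    ([A, B, C].prod).mulVec u = A.mulVec (B.mulVec (C.mulVec u)) := by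
  simp [Matrix.mulVec_mulVec]

lemma clearA (z : Fin n) (s : Finset (Fin n)) :
    ∀ u : Fin n ⊕ Fin n → ℝ, u (inl z) = 1 →
    (∀ j : Fin n, j ≠ z → j ∉ s → u (inl j) = 0 ∧ u (inr j) = 0) →
    ∃ L : List (Matrix (Fin n ⊕ Fin n) (Fin n ⊕ Fin n) ℝ),
      (∀ M ∈ L, IsGenerator M) ∧ L.prod.mulVec u = Pi.single (inl z) 1 := by
  classical
  induction s using Finset.induction_on with
  | empty =>
    intro u h1 h2
    refine ⟨[phaseP n z (-(u (inr z)))], ?_, ?_⟩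
    · intro M hM; simp only [List.mem_singleton] at hM; subst hM
      exact Or.inr (Or.inr (Or.inr (Or.inr (Or.inr (Or.inl ⟨z, _, rfl⟩)))))
    · funext r
      rw [List.prod_singleton, phaseP_mulVec]
      rcases r with k | k
      · by_cases hk : k = z
        · subst hk; simp [h1, Pi.single_apply]
        · simp [hk, (h2 k hk (Finset.notMem_empty k)).1, Pi.single_apply]
      · by_cases hk : k = z
        · subst hk; simp [h1, Pi.single_apply]
        · simp [hk, (h2 k hk (Finset.notMem_empty k)).2, Pi.single_apply]
  | @insert a s ha ih =>
    intro u h1 h2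
    by_cases haz : a = z
    · subst haz
      exact ih u h1 (fun j hjz hjs => h2 j hjz (by simp [Finset.mem_insert, hjz, hjs]))
    · have haz' : z ≠ a := Ne.symm haz
      set u1 := (qndP n z a (-(u (inl a)))).mulVec u with hu1
      set u2 := (fourierGate n a).mulVec u1 with hu2
      set u3 := (qndP n z a (-(u2 (inl a)))).mulVec u2 with hu3
      have e1 : ∀ r, u1 r = if r = inr z then u (inr z) - (-(u (inl a))) * u (inr a)
          else if r = inl a then u (inl a) + (-(u (inl a))) * u (inl z) else u r :=
        fun r => qndP_mulVec z a haz' _ u r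
      have e2 : ∀ r, u2 r = if r = inl a then u1 (inr a)
          else if r = inr a then -u1 (inl a) else u1 r :=
        fun r => fourierGate_mulVec a u1 r
      have e3 : ∀ r, u3 r = if r = inr z then u2 (inr z) - (-(u2 (inl a))) * u2 (inr a)
          else if r = inl a then u2 (inl a) + (-(u2 (inl a))) * u2 (inl z) else u2 r :=
        fun r => qndP_mulVec z a haz' _ u2 r
      have u1z : u1 (inl z) = 1 := by rw [e1]; simp [haz', h1]
      have u2z : u2 (inl z) = 1 := by rw [e2]; simp [haz', u1z]
      have u3z : u3 (inl z) = 1 := by rw [e3]; simp [haz', u2z]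
      have u2ra : u2 (inr a) = 0 := by
        rw [e2]; simp; rw [e1]; simp [haz, h1]
      have u3la : u3 (inl a) = 0 := by rw [e3]; simp [haz, u2z]
      have u3ra : u3 (inr a) = 0 := by rw [e3]; simp [haz', haz]; exact u2ra
      have hhyp : ∀ j : Fin n, j ≠ z → j ∉ s → u3 (inl j) = 0 ∧ u3 (inr j) = 0 := by
        intro j hjz hjs
        by_cases hja : j = a
        · subst hja; exact ⟨u3la, u3ra⟩
        · have hnotin : j ∉ insert a s := by simp [Finset.mem_insert, hja, hjs]
          obtain ⟨hl, hr⟩ := h2 j hjz hnotin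
          constructor
          · rw [e3]; simp [hja]; rw [e2]; simp [hja]; rw [e1]; simp [hja]; exact hl
          · rw [e3]; simp [hjz, hja]; rw [e2]; simp [hja]; rw [e1]; simp [hjz, hja]; exact hr
      obtain ⟨L, hL, hLe⟩ := ih u3 u3z hhyp
      refine ⟨L ++ [qndP n z a (-(u2 (inl a))), fourierGate n a, qndP n z a (-(u (inl a)))],
        ?_, ?_⟩
      · intro M hM
        rcases List.mem_append.mp hM with hM | hM
        · exact hL M hM
        · simp only [List.mem_cons, List.mem_singleton, List.not_mem_nil, or_false] at hM
          rcases hM with rfl | rfl | rfl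
          · exact Or.inr (Or.inr (Or.inr (Or.inl ⟨z, a, _, haz', rfl⟩)))
          · exact Or.inr (Or.inl ⟨a, rfl⟩)
          · exact Or.inr (Or.inr (Or.inr (Or.inl ⟨z, a, _, haz', rfl⟩)))
      · rw [List.prod_append, ← Matrix.mulVec_mulVec, prod_three_mulVec, ← hu1, ← hu2, ← hu3,
          hLe]

lemma reduceA (z : Fin n) (u : Fin n ⊕ Fin n → ℝ) (hu : u ≠ 0) :
    ∃ L : List (Matrix (Fin n ⊕ Fin n) (Fin n ⊕ Fin n) ℝ),
      (∀ M ∈ L, IsGenerator M) ∧ L.prod.mulVec u = Pi.single (inl z) 1 := by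
  classical
  have hex : ∃ r, u r ≠ 0 := by
    by_contra h; push_neg at h; exact hu (funext h)
  -- Stage 1: produce w = L0.prod.mulVec u with w (inl z) ≠ 0
  have stage1 : ∃ L0 : List (Matrix (Fin n ⊕ Fin n) (Fin n ⊕ Fin n) ℝ),
      (∀ M ∈ L0, IsGenerator M) ∧ (L0.prod.mulVec u) (inl z) ≠ 0 := by
    obtain ⟨r, hr⟩ := hex
    rcases r with i | i
    · refine ⟨[modeSwap n z i], ?_, ?_⟩
      · intro M hM; simp only [List.mem_singleton] at hM; subst hM
        exact Or.inr (Or.inr (Or.inr (Or.inr (Or.inr (Or.inr ⟨z, i, rfl⟩)))))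
      · rw [List.prod_singleton, modeSwap_mulVec]
        simpa using hr
    · refine ⟨[modeSwap n z i, fourierGate n i], ?_, ?_⟩
      · intro M hM
        simp only [List.mem_cons, List.mem_singleton, List.not_mem_nil, or_false] at hM
        rcases hM with rfl | rfl
        · exact Or.inr (Or.inr (Or.inr (Or.inr (Or.inr (Or.inr ⟨z, i, rfl⟩)))))
        · exact Or.inr (Or.inl ⟨i, rfl⟩)
      · rw [List.prod_cons, List.prod_singleton, ← Matrix.mulVec_mulVec, modeSwap_mulVec]
        simp only [Sum.map_inl, Equiv.swap_apply_left]
        rw [fourierGate_mulVec]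
        simpa using hr
  obtain ⟨L0, hL0, hw⟩ := stage1
  set w := L0.prod.mulVec u with hwdef
  -- Stage 2: squeeze to make the coordinate 1
  set w' := (squeezer n z (w (inl z))).mulVec w with hw'def
  have hw1 : w' (inl z) = 1 := by
    rw [hw'def, squeezer_mulVec]
    simp [inv_mul_cancel₀ hw]
  obtain ⟨L1, hL1, hL1e⟩ := clearA z Finset.univ w' hw1
    (fun j _ hj => absurd (Finset.mem_univ j) hj)
  refine ⟨L1 ++ squeezer n z (w (inl z)) :: L0, ?_, ?_⟩
  · intro M hM
    rcases List.mem_append.mp hM with hM | hM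
    · exact hL1 M hM
    · rcases List.mem_cons.mp hM with rfl | hM
      · exact Or.inl ⟨z, w (inl z), hw, rfl⟩
      · exact hL0 M hM
  · rw [List.prod_append, List.prod_cons, ← Matrix.mulVec_mulVec, ← Matrix.mulVec_mulVec,
      ← hwdef, ← hw'def, hL1e]

lemma clearB (z : Fin n) (s : Finset (Fin n)) :
    ∀ v : Fin n ⊕ Fin n → ℝ, v (inr z) = 1 →
    (∀ j : Fin n, j ≠ z → j ∉ s → v (inl j) = 0 ∧ v (inr j) = 0) →
    ∃ L : List (Matrix (Fin n ⊕ Fin n) (Fin n ⊕ Fin n) ℝ),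
      (∀ M ∈ L, IsGenerator M ∧
        M.mulVec (Pi.single (inl z) 1) = Pi.single (inl z) 1) ∧
      L.prod.mulVec v = Pi.single (inr z) 1 := by
  classical
  induction s using Finset.induction_on with
  | empty =>
    intro v h1 h2
    refine ⟨[phaseX n z (-(v (inl z)))], ?_, ?_⟩
    · intro M hM; simp only [List.mem_singleton] at hM; subst hM
      constructor
      · exact Or.inr (Or.inr (Or.inr (Or.inr (Or.inl ⟨z, _, rfl⟩))))
      · funext r
        rw [phaseX_mulVec]
        by_cases hr : r = inl z
        · subst hr; simp [Pi.single_apply]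
        · simp [hr]
    · funext r
      rw [List.prod_singleton, phaseX_mulVec]
      rcases r with k | k
      · by_cases hk : k = z
        · subst hk; simp [h1, Pi.single_apply]
        · simp [hk, (h2 k hk (Finset.notMem_empty k)).1, Pi.single_apply]
      · by_cases hk : k = z
        · subst hk; simp [h1, Pi.single_apply]
        · simp [hk, (h2 k hk (Finset.notMem_empty k)).2, Pi.single_apply]
  | @insert a s ha ih =>
    intro v h1 h2
    by_cases haz : a = z
    · subst haz
      exact ih v h1 (fun j hjz hjs => h2 j hjz (by simp [Finset.mem_insert, hjz, hjs]))
    · have haz' : z ≠ a := Ne.symm haz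
      set v1 := (qndX n z a (-(v (inr a)))).mulVec v with hv1
      set v2 := (fourierGate n a).mulVec v1 with hv2
      set v3 := (qndX n z a (-(v2 (inr a)))).mulVec v2 with hv3
      have e1 : ∀ r, v1 r = if r = inr a then v (inr a) + (-(v (inr a))) * v (inr z)
          else if r = inl z then v (inl z) - (-(v (inr a))) * v (inl a) else v r :=
        fun r => qndX_mulVec z a haz' _ v r
      have e2 : ∀ r, v2 r = if r = inl a then v1 (inr a)
          else if r = inr a then -v1 (inl a) else v1 r :=
        fun r => fourierGate_mulVec a v1 r
      have e3 : ∀ r, v3 r = if r = inr a then v2 (inr a) + (-(v2 (inr a))) * v2 (inr z)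
          else if r = inl z then v2 (inl z) - (-(v2 (inr a))) * v2 (inl a) else v2 r :=
        fun r => qndX_mulVec z a haz' _ v2 r
      have v1z : v1 (inr z) = 1 := by rw [e1]; simp [haz', h1]
      have v2z : v2 (inr z) = 1 := by rw [e2]; simp [haz', v1z]
      have v3z : v3 (inr z) = 1 := by rw [e3]; simp [haz', v2z]
      have v1xa : v1 (inr a) = 0 := by rw [e1]; simp [h1]
      have v2la : v2 (inl a) = 0 := by rw [e2]; simp [v1xa]
      have v3la : v3 (inl a) = 0 := by rw [e3]; simp [haz, v2la]
      have v3xa : v3 (inr a) = 0 := by rw [e3]; simp [v2z]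
      have hhyp : ∀ j : Fin n, j ≠ z → j ∉ s → v3 (inl j) = 0 ∧ v3 (inr j) = 0 := by
        intro j hjz hjs
        by_cases hja : j = a
        · subst hja; exact ⟨v3la, v3xa⟩
        · have hnotin : j ∉ insert a s := by simp [Finset.mem_insert, hja, hjs]
          obtain ⟨hl, hr⟩ := h2 j hjz hnotin
          constructor
          · rw [e3]; simp [hjz, hja]; rw [e2]; simp [hja]; rw [e1]; simp [hjz, hja]; exact hl
          · rw [e3]; simp [hja]; rw [e2]; simp [hja]; rw [e1]; simp [hja]; exact hr
      obtain ⟨L, hL, hLe⟩ := ih v3 v3z hhyp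
      have fixQ : ∀ g : ℝ, (qndX n z a g).mulVec (Pi.single (inl z) 1) = Pi.single (inl z) 1 := by
        intro g
        funext r
        rw [qndX_mulVec z a haz']
        split_ifs with hr1 hr2
        · subst hr1; simp [Pi.single_apply]
        · subst hr2; simp [Pi.single_apply, haz]
        · rfl
      have fixF : (fourierGate n a).mulVec (Pi.single (inl z) 1) = Pi.single (inl z) 1 := by
        funext r
        rw [fourierGate_mulVec]
        split_ifs with hr1 hr2
        · subst hr1; simp [Pi.single_apply, haz]
        · subst hr2; simp [Pi.single_apply, haz]
        · rfl
      refine ⟨L ++ [qndX n z a (-(v2 (inr a))), fourierGate n a, qndX n z a (-(v (inr a)))],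
        ?_, ?_⟩
      · intro M hM
        rcases List.mem_append.mp hM with hM | hM
        · exact hL M hM
        · simp only [List.mem_cons, List.mem_singleton, List.not_mem_nil, or_false] at hM
          rcases hM with rfl | rfl | rfl
          · exact ⟨Or.inr (Or.inr (Or.inl ⟨z, a, _, haz', rfl⟩)), fixQ _⟩
          · exact ⟨Or.inr (Or.inl ⟨a, rfl⟩), fixF⟩
          · exact ⟨Or.inr (Or.inr (Or.inl ⟨z, a, _, haz', rfl⟩)), fixQ _⟩
      · rw [List.prod_append, ← Matrix.mulVec_mulVec, prod_three_mulVec, ← hv1, ← hv2, ← hv3,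
          hLe]
end GaussAux

open GaussAux Sum in
/-- One round of symplectic Gaussian elimination: for any symplectic `Υ` there is
a finite product `G` of generator matrices such that `GΥ` fixes the standard
basis vectors `e_1` and `e_{n+1}`, i.e. the first column of `GΥ` is `e_1` and its
`(n+1)`-st column is `e_{n+1}`. -/
theorem gaussian_elimination_round (n : ℕ) (hn : 1 ≤ n)
    (Υ : Matrix (Fin n ⊕ Fin n) (Fin n ⊕ Fin n) ℝ) (hΥ : IsSymplectic Υ) :
    ∃ L : List (Matrix (Fin n ⊕ Fin n) (Fin n ⊕ Fin n) ℝ),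
      (∀ M ∈ L, IsGenerator M) ∧
      (L.prod * Υ).mulVec (Pi.single (Sum.inl (⟨0, hn⟩ : Fin n)) 1) =
        Pi.single (Sum.inl (⟨0, hn⟩ : Fin n)) 1 ∧
      (L.prod * Υ).mulVec (Pi.single (Sum.inr (⟨0, hn⟩ : Fin n)) 1) =
        Pi.single (Sum.inr (⟨0, hn⟩ : Fin n)) 1 := by
  classical
  set z : Fin n := ⟨0, hn⟩ with hz
  set u := Υ.mulVec (Pi.single (inl z) 1) with hu
  set v := Υ.mulVec (Pi.single (inr z) 1) with hv
  have hsymp : symp u v = 1 := symp_cols hΥ z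
  have hune : u ≠ 0 := by
    intro h
    rw [h] at hsymp
    simp [symp] at hsymp
  obtain ⟨L1, hL1, hL1e⟩ := reduceA z u hune
  have hv1 : (L1.prod.mulVec v) (inr z) = 1 := by
    have h := symp_list hL1 u v
    rw [hL1e, hsymp, symp_single_left] at h
    exact h
  obtain ⟨L2, hL2, hL2e⟩ := clearB z Finset.univ (L1.prod.mulVec v) hv1
    (fun j _ hj => absurd (Finset.mem_univ j) hj)
  refine ⟨L2 ++ L1, ?_, ?_, ?_⟩
  · intro M hM
    rcases List.mem_append.mp hM with hM | hM
    · exact (hL2 M hM).1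
    · exact hL1 M hM
  · rw [← Matrix.mulVec_mulVec, ← hu, List.prod_append, ← Matrix.mulVec_mulVec, hL1e]
    exact fixes_list (fun M hM => (hL2 M hM).2)
  · rw [← Matrix.mulVec_mulVec, ← hv, List.prod_append, ← Matrix.mulVec_mulVec, hL2e]
end
end
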